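/- Let n ≥ 1, let 1 ≤ ℓ ≤ n+1, and let D be a symmetric chain decomposition of Q_{2n+1}. Then the middle 2ℓ levels graph of Q_{2n+1} has a perfect matching each of whose edges lies on a chain of D. -/

import Mathlib

/-- The Hamming weight of a bitstring of length `n`, i.e., its number of 1-bits. -/
def wt {n : ℕ} (x : Fin n → Bool) : ℕ := (Finset.univ.filter fun i => x i = true).card

/-- The `n`-dimensional hypercube: vertices are bitstrings of length `n`, two of which are
adjacent iff they differ in exactly one position. -/
def cube (n : ℕ) : SimpleGraph (Fin n → Bool) where
  Adj x y := hammingDist x y = 1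
  symm := by constructor; intro x y h; show hammingDist y x = 1; rw [hammingDist_comm]; exact h
  loopless := by constructor; intro x h; have h' : hammingDist x x = 1 := h; simp [hammingDist_self] at h'
/-- A symmetric chain in the `n`-cube: a path `(x_k, x_{k+1}, …, x_{n−k})` in `cube n`
where `x_i` has Hamming weight `i` for each `k ≤ i ≤ n − k`. -/
def IsSymChain (n : ℕ) (c : List (Fin n → Bool)) : Prop :=
  c ≠ [] ∧ c.Chain' (cube n).Adj ∧
  ∃ k : ℕ, (∀ (i : ℕ) (h : i < c.length), wt (c.get ⟨i, h⟩) = k + i) ∧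
    2 * k + (c.length - 1) = n

/-- A symmetric chain decomposition of the `n`-cube: a collection of symmetric chains
whose vertex sets partition the vertex set. -/
def IsSCD (n : ℕ) (D : Set (List (Fin n → Bool))) : Prop :=
  (∀ c ∈ D, IsSymChain n c) ∧ ∀ x : Fin n → Bool, ∃! c, c ∈ D ∧ x ∈ c

/-- The edges lying on a chain, i.e., the unordered pairs of consecutive entries. -/
def chainEdges {V : Type*} (c : List V) : Set (Sym2 V) :=
  {e | ∃ (i : ℕ) (h : i + 1 < c.length),
    e = s(c.get ⟨i, Nat.lt_of_succ_lt h⟩, c.get ⟨i + 1, h⟩)}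

/-- All edges lying on some chain of the collection `D`. -/
def scdEdges {n : ℕ} (D : Set (List (Fin n → Bool))) : Set (Sym2 (Fin n → Bool)) :=
  ⋃ c ∈ D, chainEdges c

/-- Two chain decompositions are edge-disjoint if no edge lies on a chain of one
and also on a chain of the other. -/
def EdgeDisjointSCD {n : ℕ} (D D' : Set (List (Fin n → Bool))) : Prop :=
  Disjoint (scdEdges D) (scdEdges D')
/-- The vertex set of the middle `2ℓ` levels of the `(2n+1)`-cube: bitstrings with
Hamming weight in the interval `[n+1−ℓ, n+ℓ]`. -/
def middleSet (n l : ℕ) : Set (Fin (2 * n + 1) → Bool) :=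
  {x | n + 1 - l ≤ wt x ∧ wt x ≤ n + l}

/-- The middle `2ℓ` levels graph: the subgraph of the `(2n+1)`-cube induced by the vertices
with Hamming weight in `[n+1−ℓ, n+ℓ]`. -/
def middleGraph (n l : ℕ) : SimpleGraph (middleSet n l) :=
  (cube (2 * n + 1)).induce (middleSet n l)

/-- `H` is a cycle factor of `G`: a spanning subgraph in which every vertex has degree 2. -/
def IsCycleFactor {V : Type*} (G H : SimpleGraph V) : Prop :=
  H ≤ G ∧ ∀ v, (H.neighborSet v).ncard = 2

/-- `H` is a perfect matching of `G`: a spanning subgraph in which every vertex has degree 1. -/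
def IsPerfectMatchingOf {V : Type*} (G H : SimpleGraph V) : Prop :=
  H ≤ G ∧ ∀ v, (H.neighborSet v).ncard = 1
open Classical

/-- The minimal weight parameter of a symmetric chain. -/
noncomputable def kOf {m : ℕ} (c : List (Fin m → Bool)) : ℕ :=
  if h : IsSymChain m c then h.2.2.choose else 0

lemma kOf_spec {m : ℕ} {c : List (Fin m → Bool)} (h : IsSymChain m c) :
    (∀ (i : ℕ) (hi : i < c.length), wt (c.get ⟨i, hi⟩) = kOf c + i) ∧
      2 * kOf c + (c.length - 1) = m := by
  rw [kOf, dif_pos h]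
  exact h.2.2.choose_spec

/-- The chain of `D` containing `x`. -/
noncomputable def chainOf {m : ℕ} (D : Set (List (Fin m → Bool)))
    (x : Fin m → Bool) : List (Fin m → Bool) :=
  if h : ∃! c, c ∈ D ∧ x ∈ c then h.choose else []

lemma chainOf_spec {m : ℕ} {D : Set (List (Fin m → Bool))} (hD : IsSCD m D)
    (x : Fin m → Bool) : chainOf D x ∈ D ∧ x ∈ chainOf D x := by
  rw [chainOf, dif_pos (hD.2 x)]
  exact (hD.2 x).choose_spec.1

lemma chainOf_eq {m : ℕ} {D : Set (List (Fin m → Bool))} (hD : IsSCD m D)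
    {x : Fin m → Bool} {c : List (Fin m → Bool)} (hc : c ∈ D) (hx : x ∈ c) :
    chainOf D x = c := by
  rw [chainOf, dif_pos (hD.2 x)]
  exact ((hD.2 x).choose_spec.2 c ⟨hc, hx⟩).symm

/-- The matching partner of `x`: its successor or predecessor on the chain of `D`
containing it, depending on parity. -/
noncomputable def partner (n l : ℕ) (D : Set (List (Fin (2 * n + 1) → Bool)))
    (x : Fin (2 * n + 1) → Bool) : Fin (2 * n + 1) → Bool :=
  if (wt x - max (kOf (chainOf D x)) (n + 1 - l)) % 2 = 0 then
    (chainOf D x).getD (wt x - kOf (chainOf D x) + 1) x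
  else
    (chainOf D x).getD (wt x - kOf (chainOf D x) - 1) x

lemma partner_spec (n : ℕ) {D : Set (List (Fin (2 * n + 1) → Bool))}
    (hD : IsSCD (2 * n + 1) D) {l : ℕ} (hl1 : 1 ≤ l) (hl2 : l ≤ n + 1)
    {x : Fin (2 * n + 1) → Bool} (hx : x ∈ middleSet n l) :
    partner n l D x ∈ middleSet n l ∧
    partner n l D (partner n l D x) = x ∧
    (cube (2 * n + 1)).Adj x (partner n l D x) ∧
    s(x, partner n l D x) ∈ scdEdges D := by
  obtain ⟨hx1, hx2⟩ := hx
  obtain ⟨hcD, hxc⟩ := chainOf_spec hD x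
  set c := chainOf D x with hc
  have hsym := hD.1 c hcD
  have hk := kOf_spec hsym
  set k := kOf c with hkdef
  have hlen : 2 * k + (c.length - 1) = 2 * n + 1 := hk.2
  have hpos : 1 ≤ c.length := List.length_pos_iff.mpr hsym.1
  obtain ⟨⟨i, hi⟩, hgi⟩ := List.mem_iff_get.mp hxc
  have hwx : wt x = k + i := by rw [← hgi]; exact hk.1 i hi
  by_cases hc0 : (wt x - max k (n + 1 - l)) % 2 = 0
  · -- match with successor
    have hi1 : i + 1 < c.length := by omega
    set y := c.get ⟨i + 1, hi1⟩ with hy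
    have hwy : wt y = k + (i + 1) := hk.1 (i + 1) hi1
    have hpx : partner n l D x = y := by
      have h1 : wt x - k + 1 = i + 1 := by omega
      rw [partner, if_pos hc0, ← hc, ← hkdef, h1, List.getD_eq_get c x ⟨i + 1, hi1⟩]
    have hyc : y ∈ c := List.get_mem c ⟨i + 1, hi1⟩
    have hymid : y ∈ middleSet n l := by constructor <;> omega
    refine ⟨by rwa [hpx], ?_, ?_, ?_⟩
    · rw [hpx]
      have hcy : chainOf D y = c := chainOf_eq hD hcD hyc
      have hcond : ¬ ((wt y - max (kOf (chainOf D y)) (n + 1 - l)) % 2 = 0) := by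
        rw [hcy, ← hkdef]; omega
      have h2 : wt y - kOf (chainOf D y) - 1 = i := by rw [hcy, ← hkdef]; omega
      rw [partner, if_neg hcond, h2, hcy, List.getD_eq_get c y ⟨i, hi⟩, hgi]
    · have := List.isChain_iff_getElem.mp hsym.2.1 i (by omega)
      rw [hpx, ← hgi]
      exact this
    · rw [hpx]
      have : s(x, y) ∈ chainEdges c := ⟨i, hi1, by rw [← hgi]⟩
      exact Set.mem_iUnion₂.mpr ⟨c, hcD, this⟩
  · -- match with predecessor
    have hi0 : 1 ≤ i := by omega
    have hi1 : i - 1 + 1 < c.length := by omega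
    have hi' : i - 1 < c.length := by omega
    set y := c.get ⟨i - 1, hi'⟩ with hy
    have hwy : wt y = k + (i - 1) := hk.1 (i - 1) hi'
    have hpx : partner n l D x = y := by
      have h1 : wt x - k - 1 = i - 1 := by omega
      rw [partner, if_neg hc0, ← hc, ← hkdef, h1, List.getD_eq_get c x ⟨i - 1, hi'⟩]
    have hyc : y ∈ c := List.get_mem c ⟨i - 1, hi'⟩
    have hymid : y ∈ middleSet n l := by constructor <;> omega
    refine ⟨by rwa [hpx], ?_, ?_, ?_⟩
    · rw [hpx]
      have hcy : chainOf D y = c := chainOf_eq hD hcD hyc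
      have hcond : (wt y - max (kOf (chainOf D y)) (n + 1 - l)) % 2 = 0 := by
        rw [hcy, ← hkdef]; omega
      have h2 : wt y - kOf (chainOf D y) + 1 = i := by rw [hcy, ← hkdef]; omega
      rw [partner, if_pos hcond, h2, hcy, List.getD_eq_get c y ⟨i, hi⟩, hgi]
    · have : (cube (2 * n + 1)).Adj (c.get ⟨i - 1, hi'⟩) (c.get ⟨i - 1 + 1, hi1⟩) :=
        List.isChain_iff_getElem.mp hsym.2.1 (i - 1) (by omega)
      have h3 : c.get ⟨i - 1 + 1, by omega⟩ = x := by
        have : i - 1 + 1 = i := by omega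
        simp_rw [this]; exact hgi
      rw [hpx]
      rw [h3] at this
      exact this.symm
    · rw [hpx]
      have h3 : c.get ⟨i - 1 + 1, hi1⟩ = x := by
        have h4 : i - 1 + 1 = i := by omega
        simp_rw [h4]; exact hgi
      have : s(y, x) ∈ chainEdges c := ⟨i - 1, hi1, by rw [h3]⟩
      rw [Sym2.eq_swap]
      exact Set.mem_iUnion₂.mpr ⟨c, hcD, this⟩

/-- Given a symmetric chain decomposition `D` of the `(2n+1)`-cube and `1 ≤ ℓ ≤ n+1`, the
middle `2ℓ` levels graph has a perfect matching each of whose edges lies on a chain of `D`. -/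
theorem scd_gives_perfect_matching (n : ℕ) (hn : 1 ≤ n)
    (D : Set (List (Fin (2 * n + 1) → Bool))) (hD : IsSCD (2 * n + 1) D)
    (l : ℕ) (hl1 : 1 ≤ l) (hl2 : l ≤ n + 1) :
    ∃ M : SimpleGraph (middleSet n l),
      IsPerfectMatchingOf (middleGraph n l) M ∧
      ∀ u v : middleSet n l, M.Adj u v → s(u.val, v.val) ∈ scdEdges D := by
    classical
  have key : ∀ x : middleSet n l,
      partner n l D x.val ∈ middleSet n l ∧
      partner n l D (partner n l D x.val) = x.val ∧
      (cube (2 * n + 1)).Adj x.val (partner n l D x.val) ∧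
      s(x.val, partner n l D x.val) ∈ scdEdges D :=
    fun x => partner_spec n hD hl1 hl2 x.2
  let A : middleSet n l → middleSet n l → Prop := fun u v =>
    partner n l D u.val = v.val ∨ partner n l D v.val = u.val
  have hloop : ∀ u, ¬ A u u := by
    intro u h
    have hadj := (key u).2.2.1
    rcases h with h | h <;> rw [h] at hadj <;> exact (cube _).loopless.irrefl _ hadj
  let M : SimpleGraph (middleSet n l) :=
    { Adj := A
      symm := ⟨fun u v h => Or.symm h⟩
      loopless := ⟨fun u h => hloop u h⟩ }
  refine ⟨M, ⟨?_, ?_⟩, ?_⟩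
  · -- M ≤ middleGraph
    intro u v h
    have h' : A u v := h
    rcases h' with h' | h'
    · have := (key u).2.2.1; rw [h'] at this; exact this
    · have := (key v).2.2.1; rw [h'] at this; exact this.symm
  · -- degree 1
    intro v
    have hmem := (key v).1
    have hns : M.neighborSet v = {(⟨partner n l D v.val, hmem⟩ : middleSet n l)} := by
      apply Set.eq_singleton_iff_unique_mem.mpr
      constructor
      · show M.Adj v _
        exact Or.inl rfl
      · intro u hu
        have hu' : A v u := hu
        rcases hu' with h | h
        · exact Subtype.ext h.symm
        · have := (key u).2.1
          rw [h] at this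
          exact Subtype.ext this.symm
    rw [hns]
    exact Set.ncard_singleton _
  · -- edges on chains
    intro u v h
    have h' : A u v := h
    rcases h' with h' | h'
    · have := (key u).2.2.2; rwa [h'] at this
    · have := (key v).2.2.2; rw [h'] at this; rwa [Sym2.eq_swap]
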